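/- The inclusion h : P ↪ Q, where Q = ℕx + ℕy + ℕ(z−x) + ℕ(z−y) inside ℤx + ℤy + ℤz and P = ℕx + ℕy, is exact but not integral: one has h(x) + (z−x) = h(y) + (z−y), but there exist no x₃, x₄ ∈ P and q ∈ Q with z−x = h(x₃) + q, z−y = h(x₄) + q and x + x₃ = y + x₄. -/

import Mathlib

/-- `P = ℕx + ℕy` inside `ℤx + ℤy + ℤz`, with `x = (1,0,0)`, `y = (0,1,0)`. -/
def P7 : AddSubmonoid (ℤ × ℤ × ℤ) :=
  AddSubmonoid.closure {(1, 0, 0), (0, 1, 0)}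

/-- `Q = ℕx + ℕy + ℕ(z-x) + ℕ(z-y)` inside `ℤx + ℤy + ℤz`. -/
def Q7 : AddSubmonoid (ℤ × ℤ × ℤ) :=
  AddSubmonoid.closure {(1, 0, 0), (0, 1, 0), (-1, 0, 1), (0, -1, 1)}

lemma Q7_bound {p : ℤ × ℤ × ℤ} (hp : p ∈ Q7) :
    0 ≤ p.2.2 ∧ max 0 (-p.1) + max 0 (-p.2.1) ≤ p.2.2 := by
  induction hp using AddSubmonoid.closure_induction with
  | mem x hx =>
      simp only [Set.mem_insert_iff, Set.mem_singleton_iff] at hx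
      rcases hx with h | h | h | h <;> subst h <;> simp
  | zero => simp
  | add x y hx hy ihx ihy =>
      obtain ⟨h1, h2⟩ := ihx
      obtain ⟨h3, h4⟩ := ihy
      refine ⟨by simp [Prod.snd_add]; omega, ?_⟩
      simp only [Prod.fst_add, Prod.snd_add, neg_add]
      have : max 0 (-x.1 + -y.1) ≤ max 0 (-x.1) + max 0 (-y.1) := by
        simp only [le_max_iff, max_le_iff] at *; omega
      have : max 0 (-x.2.1 + -y.2.1) ≤ max 0 (-x.2.1) + max 0 (-y.2.1) := by
        simp only [le_max_iff, max_le_iff] at *; omega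
      simp only [le_max_iff, max_le_iff] at *; omega

lemma P7_bound {p : ℤ × ℤ × ℤ} (hp : p ∈ P7) :
    0 ≤ p.1 ∧ 0 ≤ p.2.1 ∧ p.2.2 = 0 := by
  induction hp using AddSubmonoid.closure_induction with
  | mem x hx =>
      simp only [Set.mem_insert_iff, Set.mem_singleton_iff] at hx
      rcases hx with h | h <;> subst h <;> simp
  | zero => simp
  | add x y hx hy ihx ihy =>
      simp only [Prod.fst_add, Prod.snd_add] at *; omega

lemma P7_mem {a b : ℤ} (ha : 0 ≤ a) (hb : 0 ≤ b) : ((a, b, 0) : ℤ × ℤ × ℤ) ∈ P7 := by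
  have h1 : ((1, 0, 0) : ℤ × ℤ × ℤ) ∈ P7 := AddSubmonoid.subset_closure (by simp)
  have h2 : ((0, 1, 0) : ℤ × ℤ × ℤ) ∈ P7 := AddSubmonoid.subset_closure (by simp)
  have : ((a, b, 0) : ℤ × ℤ × ℤ) = a.toNat • (1, 0, 0) + b.toNat • ((0, 1, 0) : ℤ × ℤ × ℤ) := by
    simp [Prod.ext_iff]; omega
  rw [this]
  exact add_mem (nsmul_mem h1 _) (nsmul_mem h2 _)

theorem stmt_7 :
    (∀ a b : ℤ, ((a, b, 0) : ℤ × ℤ × ℤ) ∈ Q7 → ((a, b, 0) : ℤ × ℤ × ℤ) ∈ P7) ∧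
    (((1, 0, 0) : ℤ × ℤ × ℤ) + (-1, 0, 1) = ((0, 1, 0) : ℤ × ℤ × ℤ) + (0, -1, 1)) ∧
    ¬ ∃ x₃ ∈ P7, ∃ x₄ ∈ P7, ∃ q ∈ Q7,
        ((-1, 0, 1) : ℤ × ℤ × ℤ) = x₃ + q ∧ ((0, -1, 1) : ℤ × ℤ × ℤ) = x₄ + q ∧
        ((1, 0, 0) : ℤ × ℤ × ℤ) + x₃ = ((0, 1, 0) : ℤ × ℤ × ℤ) + x₄ := by
  refine ⟨?_, by norm_num, ?_⟩
  · intro a b hab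
    have := Q7_bound hab
    simp only [le_max_iff, max_le_iff] at this
    exact P7_mem (by omega) (by omega)
  · rintro ⟨x₃, h₃, x₄, h₄, q, hq, e1, e2, e3⟩
    obtain ⟨p3a, p3b, p3c⟩ := P7_bound h₃
    obtain ⟨p4a, p4b, p4c⟩ := P7_bound h₄
    obtain ⟨qa, qb⟩ := Q7_bound hq
    obtain ⟨x3a, x3b, x3c⟩ := x₃
    obtain ⟨x4a, x4b, x4c⟩ := x₄
    obtain ⟨qu, qv, qw⟩ := q
    simp only [Prod.mk_add_mk, Prod.mk.injEq] at e1 e2 e3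
    simp only at *
    omega
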